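/- Let ρ^{p₁…p_{2N}} = ⊗_{i=1}^{N} ρ^{p_{2i−1},p_{2i}} be a tensor product of N two-qubit states and M = ⊗_{j=1}^{N−1} M^{p_{2j},p_{2j+1}} a tensor product of N−1 bipartite POVM elements acting on adjacent pairs. Then the unnormalized post-measurement reduced state of qubits p₁ and p_{2N}, Tr_{p₂…p_{2N−1}}[ρ (𝟙^{p₁} ⊗ M ⊗ 𝟙^{p_{2N}})], equals (1/4) Σ_{k,l} [∏_{i=1}^{N} R^{p_{2i−1},p_{2i}} 𝔯^{p_{2i},p_{2i+1}}]_{kl} σ_k ⊗ σ_l, where 𝔯^{p_{2N},p_{2N+1}} := 𝟙₄ by convention. -/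

import Mathlib

open Matrix Kronecker ComplexOrder

/-- Pauli matrices, with `σ 0 = I`. -/
noncomputable def σ : Fin 4 → Matrix (Fin 2) (Fin 2) ℂ :=
  ![1, !![0, 1; 1, 0], !![0, -Complex.I; Complex.I, 0], !![1, 0; 0, -1]]

abbrev B2 := Fin 2 × Fin 2


noncomputable def conj4 (T : Matrix B2 B2 ℂ) : Matrix B2 B2 ℂ :=
  Matrix.of fun x y => T (x.2, y.1) (x.1, y.2)

lemma sum_pi_succ {n : ℕ} {B : Type*} [Fintype B] {M : Type*} [AddCommMonoid M]
    (f : (Fin (n+1) → B) → M) :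
    ∑ g : Fin (n+1) → B, f g = ∑ b : B, ∑ g : Fin n → B, f (Fin.cons b g) := by
  rw [← Equiv.sum_comp (Fin.consEquiv fun _ => B) f, Fintype.sum_prod_type]
  rfl

lemma sum_ind2 (g : B2 → ℂ) (u v : Fin 2) :
    ∑ c : B2, (if u = c.1 then (1:ℂ) else 0) * (if v = c.2 then 1 else 0) * g c = g (u, v) := by
  rw [Fintype.sum_prod_type]
  simp [ite_mul, Finset.sum_ite_eq, Finset.sum_ite_eq']

lemma sum_ind3 (f : B2 → ℂ) (u : Fin 2) :
    ∑ b : B2, (if b.1 = u then (1:ℂ) else 0) * f b = ∑ β : Fin 2, f (u, β) := by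
  rw [Fintype.sum_prod_type]
  simp [ite_mul, Finset.sum_ite_eq, Finset.sum_ite_eq']

noncomputable def chainL (n : ℕ) (ρf : Fin (n+1) → Matrix B2 B2 ℂ)
    (Mf : Fin n → Matrix B2 B2 ℂ) (x y : B2) : ℂ :=
  ∑ I : Fin (n+1) → B2, ∑ K : Fin (n+1) → B2,
    (if (I 0).1 = x.1 then (1:ℂ) else 0) * (if (K 0).1 = x.2 then 1 else 0) *
    (if (I (Fin.last n)).2 = y.1 then 1 else 0) * (if (K (Fin.last n)).2 = y.2 then 1 else 0) *
    ((∏ i, ρf i (I i) (K i)) *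
     ∏ j : Fin n, Mf j ((K j.castSucc).2, (K j.succ).1) ((I j.castSucc).2, (I j.succ).1))

lemma chainL_zero (ρf : Fin 1 → Matrix B2 B2 ℂ) (Mf : Fin 0 → Matrix B2 B2 ℂ) (x y : B2) :
    chainL 0 ρf Mf x y = ρf 0 (x.1, y.1) (x.2, y.2) := by
  simp only [chainL, sum_pi_succ, Fintype.sum_unique, Fin.last_zero, Fin.cons_zero,
    Finset.univ_eq_empty, Finset.prod_empty, mul_one, Fin.prod_univ_succ]
  simp [Fintype.sum_prod_type, ite_mul, mul_ite, Finset.sum_ite_eq, Finset.sum_ite_eq']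

set_option maxHeartbeats 2000000 in
lemma chainL_succ (n : ℕ) (ρf : Fin (n+2) → Matrix B2 B2 ℂ)
    (Mf : Fin (n+1) → Matrix B2 B2 ℂ) (x y : B2) :
    chainL (n+1) ρf Mf x y
    = ∑ c : B2, (conj4 (ρf 0) * conj4 (Mf 0)) (x.2, x.1) (c.2, c.1) *
        chainL n (fun i => ρf i.succ) (fun j => Mf j.succ) c y := by
  conv_lhs => rw [chainL]
  conv_lhs => rw [sum_pi_succ]
  conv_lhs => enter [2, b1, 2, I']; rw [sum_pi_succ]
  -- LHS now: ∑ b1 ∑ I' ∑ b2 ∑ K'; reorder to ∑ I' ∑ K' ∑ b2 ∑ b1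
  conv_lhs => rw [Finset.sum_comm]
  conv_lhs => enter [2, I']; rw [Finset.sum_comm]
  conv_lhs => enter [2, I', 2, b2]; rw [Finset.sum_comm]
  conv_lhs => enter [2, I']; rw [Finset.sum_comm]
  -- RHS: unfold chainL n, pull sums out
  conv_rhs => enter [2, c]; rw [chainL]
  conv_rhs => simp only [Finset.mul_sum]
  conv_rhs => rw [Finset.sum_comm]
  conv_rhs => enter [2, I']; rw [Finset.sum_comm]
  refine Finset.sum_congr rfl fun I' _ => Finset.sum_congr rfl fun K' _ => ?_
  simp only [Fin.cons_zero, ← Fin.succ_last, Fin.cons_succ, Fin.prod_univ_succ,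
    Fin.castSucc_zero, ← Fin.succ_castSucc, Matrix.mul_apply, conj4, Matrix.of_apply]
  obtain ⟨x1, x2⟩ := x
  obtain ⟨y1, y2⟩ := y
  simp only [Fintype.sum_prod_type, Fin.sum_univ_two]
  generalize (ρf (Fin.succ 0) (I' 0) (K' 0) * ∏ i : Fin n, ρf i.succ.succ (I' i.succ) (K' i.succ)) = P
  generalize (∏ x : Fin n, Mf x.succ ((K' x.castSucc).2, (K' x.succ).1) ((I' x.castSucc).2, (I' x.succ).1)) = Q
  generalize (if (I' (Fin.last n)).2 = y1 then (1:ℂ) else 0) = A1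
  generalize (if (K' (Fin.last n)).2 = y2 then (1:ℂ) else 0) = A2
  generalize (I' 0).1 = u
  generalize (K' 0).1 = v
  fin_cases u <;> fin_cases v <;> fin_cases x1 <;> fin_cases x2 <;> simp <;> ring

lemma chainKey (n : ℕ) : ∀ (ρf : Fin (n+1) → Matrix B2 B2 ℂ)
    (Mf : Fin n → Matrix B2 B2 ℂ) (x y : B2),
    chainL n ρf Mf x y
    = ∑ b : B2,
        (List.ofFn fun j : Fin n => conj4 (ρf j.castSucc) * conj4 (Mf j)).prod (x.2, x.1) b
        * ρf (Fin.last n) (b.2, y.1) (b.1, y.2) := by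
  induction n with
  | zero =>
    intro ρf Mf x y
    rw [chainL_zero]
    simp [Matrix.one_apply, ite_mul, Finset.sum_ite_eq, Fin.last_zero]
  | succ n ih =>
    intro ρf Mf x y
    rw [chainL_succ]
    conv_lhs => enter [2, c]; rw [ih]
    conv_lhs => simp only [Finset.mul_sum]
    conv_lhs => rw [Finset.sum_comm]
    refine Finset.sum_congr rfl fun b _ => ?_
    rw [List.ofFn_succ, List.prod_cons, Matrix.mul_apply, Finset.sum_mul]
    apply Fintype.sum_equiv (Equiv.prodComm (Fin 2) (Fin 2))
    intro c
    obtain ⟨c1, c2⟩ := c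
    simp only [Equiv.prodComm_apply, Prod.swap_prod_mk,
      Fin.succ_castSucc, Fin.succ_last, Fin.castSucc_zero]
    ring

noncomputable def Umat : Matrix (Fin 4) B2 ℂ := Matrix.of fun k ab => σ k ab.1 ab.2
noncomputable def Vmat : Matrix B2 (Fin 4) ℂ := Matrix.of fun ab l => σ l ab.2 ab.1

lemma trace_expand (T : Matrix B2 B2 ℂ) (k l : Fin 4) :
    (T * (σ k ⊗ₖ σ l)).trace = (Umat * conj4 T * Vmat) k l := by
  simp only [Matrix.trace, Matrix.diag, Matrix.mul_apply, Matrix.kroneckerMap_apply,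
    conj4, Umat, Vmat, Matrix.of_apply, Finset.sum_apply, Fintype.sum_prod_type,
    Fin.sum_univ_two, Finset.sum_mul, Finset.mul_sum]
  ring

lemma pauliComplete (a b c d : Fin 2) :
    ∑ k : Fin 4, σ k a b * σ k c d = if a = d ∧ b = c then 2 else 0 := by
  fin_cases a <;> fin_cases b <;> fin_cases c <;> fin_cases d <;>
    simp [σ, Fin.sum_univ_four, Matrix.one_apply] <;> ring_nf

lemma pauliOrth (k l : Fin 4) :
    ∑ ab : B2, σ k ab.1 ab.2 * σ l ab.2 ab.1 = if k = l then 2 else 0 := by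
  rw [Fintype.sum_prod_type]
  fin_cases k <;> fin_cases l <;>
    simp [σ, Fin.sum_univ_two, Matrix.one_apply] <;> ring_nf

lemma VU : Vmat * Umat = (2 : ℂ) • 1 := by
  ext ⟨a, b⟩ ⟨c, d⟩
  simp only [Matrix.mul_apply, Vmat, Umat, Matrix.of_apply, Matrix.smul_apply,
    Matrix.one_apply, smul_eq_mul]
  rw [pauliComplete]
  by_cases h : (a, b) = (c, d)
  · obtain ⟨rfl, rfl⟩ := Prod.mk.injEq .. ▸ h; simp
  · rw [if_neg h, if_neg, mul_zero]
    rintro ⟨rfl, rfl⟩; exact h rfl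

lemma UV : Umat * Vmat = (2 : ℂ) • 1 := by
  ext k l
  simp only [Matrix.mul_apply, Umat, Vmat, Matrix.of_apply, Matrix.smul_apply,
    Matrix.one_apply, smul_eq_mul]
  rw [pauliOrth]
  split <;> simp

noncomputable def Φ (E : Matrix B2 B2 ℂ) : Matrix (Fin 4) (Fin 4) ℂ :=
  (1/2 : ℂ) • (Umat * E * Vmat)

lemma Φ_one : Φ 1 = 1 := by
  simp [Φ, UV]

lemma Φ_mul (X Y : Matrix B2 B2 ℂ) : Φ X * Φ Y = Φ (X * Y) := by
  simp only [Φ, Matrix.smul_mul, Matrix.mul_smul, smul_smul]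
  rw [show Umat * X * Vmat * (Umat * Y * Vmat) = Umat * X * ((Vmat * Umat) * (Y * Vmat)) by
    simp only [Matrix.mul_assoc]]
  rw [VU]
  simp only [Matrix.smul_mul, smul_smul, Matrix.one_mul, Matrix.mul_assoc, Matrix.mul_smul]
  norm_num

lemma Φ_listprod (L : List (Matrix B2 B2 ℂ)) : (L.map Φ).prod = Φ L.prod := by
  induction L with
  | nil => simp [Φ_one]
  | cons x xs ih => simp [List.prod_cons, ih, Φ_mul]

lemma UAV_mul (A C : Matrix B2 B2 ℂ) :
    (Umat * A * Vmat) * ((1/4 : ℂ) • (Umat * C * Vmat)) = Φ (A * C) := by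
  have h : ((1/2:ℂ) • (Umat * A * Vmat)) * ((1/2:ℂ) • (Umat * C * Vmat))
      = (1/4:ℂ) • ((Umat * A * Vmat) * (Umat * C * Vmat)) := by
    rw [Matrix.smul_mul, Matrix.mul_smul, smul_smul]; norm_num
  rw [Matrix.mul_smul, ← h]
  exact Φ_mul A C

lemma UAV_mul_one (A : Matrix B2 B2 ℂ) :
    (Umat * A * Vmat) = (2:ℂ) • Φ A := by
  simp [Φ, smul_smul]

set_option maxHeartbeats 1000000 in
lemma contract (Z : Matrix B2 B2 ℂ) (p1 p2 q1 q2 : Fin 2) :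
    (1/4 : ℂ) * ∑ k : Fin 4, ∑ l : Fin 4,
      ((2:ℂ) • Φ Z) k l * (σ k p1 q1 * σ l p2 q2) = Z (q1, p1) (p2, q2) := by
  have hent : ∀ k l, ((2:ℂ) • Φ Z) k l
      = ∑ a : B2, ∑ c : B2, σ k a.1 a.2 * Z a c * σ l c.2 c.1 := by
    intro k l
    simp only [Φ, Matrix.smul_apply, smul_smul, smul_eq_mul]
    rw [show (2:ℂ) * (1/2 * (Umat * Z * Vmat) k l) = (Umat * Z * Vmat) k l by ring,
      Matrix.mul_apply]
    simp only [Matrix.mul_apply, Umat, Vmat, Matrix.of_apply, Finset.sum_mul]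
    rw [Finset.sum_comm]
  simp only [hent, Finset.sum_mul]
  -- order: k l a c → a c k l
  conv_lhs => enter [2, 2, k]; rw [Finset.sum_comm]
  conv_lhs => enter [2]; rw [Finset.sum_comm]
  conv_lhs => enter [2, 2, a, 2, k]; rw [Finset.sum_comm]
  conv_lhs => enter [2, 2, a]; rw [Finset.sum_comm]
  have key : ∀ a c : B2, ∑ k : Fin 4, ∑ l : Fin 4,
      σ k a.1 a.2 * Z a c * σ l c.2 c.1 * (σ k p1 q1 * σ l p2 q2)
      = Z a c * ((if a.1 = q1 ∧ a.2 = p1 then (2:ℂ) else 0) *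
                 (if c.2 = q2 ∧ c.1 = p2 then (2:ℂ) else 0)) := by
    intro a c
    rw [← pauliComplete a.1 a.2 p1 q1, ← pauliComplete c.2 c.1 p2 q2]
    rw [Finset.sum_mul_sum, Finset.mul_sum]
    refine Finset.sum_congr rfl fun k _ => ?_
    rw [Finset.mul_sum]
    exact Finset.sum_congr rfl fun l _ => by ring
  simp only [key]
  fin_cases q1 <;> fin_cases q2 <;> fin_cases p1 <;> fin_cases p2 <;>
    simp [Fintype.sum_prod_type, Fin.sum_univ_two] <;> ring

lemma Jcollapse (m : ℕ) (q1 q2 : Fin 2) (A B : Prop) [dA : Decidable A] [dB : Decidable B]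
    (f : (Fin (m+1) → B2) → ℂ) (I : Fin (m+1) → B2) :
    (∑ J : Fin (m+1) → B2,
      if A ∧ (J 0).1 = q1 ∧ B ∧ (J (Fin.last m)).2 = q2 ∧
         (∀ i : Fin (m+1), (i:ℕ) ≠ 0 → (I i).1 = (J i).1) ∧
         (∀ i : Fin (m+1), (i:ℕ) ≠ m → (I i).2 = (J i).2)
      then f J else 0)
    = if A ∧ B then
        f (fun i => (if (i:ℕ) = 0 then q1 else (I i).1, if (i:ℕ) = m then q2 else (I i).2))
      else 0 := by
  classical
  set Jd : Fin (m+1) → B2 := fun i =>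
    (if (i:ℕ) = 0 then q1 else (I i).1, if (i:ℕ) = m then q2 else (I i).2) with hJd
  rw [Finset.sum_eq_single Jd]
  · apply if_congr _ rfl rfl
    constructor
    · rintro ⟨hA, -, hB, -, -, -⟩; exact ⟨hA, hB⟩
    · rintro ⟨hA, hB⟩
      refine ⟨hA, ?_, hB, ?_, ?_, ?_⟩
      · simp [hJd]
      · simp [hJd]
      · intro i hi; have hi' : i ≠ 0 := fun h0 => hi (by simp [h0]); simp [hJd, hi, hi']
      · intro i hi; simp [hJd, hi]
  · intro J _ hne
    rw [if_neg]
    rintro ⟨-, h1, -, h2, h3, h4⟩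
    apply hne
    funext i
    have e1 : (J i).1 = (Jd i).1 := by
      by_cases h : (i:ℕ) = 0
      · have hi0 : i = 0 := by ext; simpa using h
        rw [hi0] at *
        simp [hJd, h1]
      · rw [← h3 i h]; have h' : i ≠ 0 := fun h0 => h (by simp [h0]); simp [hJd, h, h']
    have e2 : (J i).2 = (Jd i).2 := by
      by_cases h : (i:ℕ) = m
      · have hil : i = Fin.last m := by ext; simpa using h
        rw [hil] at *
        simp [hJd, h2]
      · rw [← h4 i h]; simp [hJd, h]
    exact Prod.ext e1.symm e2.symm |>.symm
  · intro h; exact absurd (Finset.mem_univ Jd) h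


lemma toChain (m : ℕ) (ρf : Fin (m+1) → Matrix B2 B2 ℂ) (Mf : Fin m → Matrix B2 B2 ℂ)
    (p q : B2) :
    (∑ I : Fin (m+1) → B2,
      if (I 0).1 = p.1 ∧ (I (Fin.last m)).2 = p.2 then
        ((Matrix.of fun I' J' : Fin (m+1) → B2 => ∏ i, ρf i (I' i) (J' i)) *
          (Matrix.of fun I' J' : Fin (m+1) → B2 =>
            (if (I' 0).1 = (J' 0).1 then (1:ℂ) else 0) *
            (if (I' (Fin.last m)).2 = (J' (Fin.last m)).2 then 1 else 0) *
            ∏ j : Fin m,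
              Mf j ((I' j.castSucc).2, (I' j.succ).1) ((J' j.castSucc).2, (J' j.succ).1)))
          I (fun i => (if (i:ℕ) = 0 then q.1 else (I i).1, if (i:ℕ) = m then q.2 else (I i).2))
      else 0)
    = chainL m ρf Mf (p.1, q.1) (p.2, q.2) := by
  classical
  have hbody : ∀ I : Fin (m+1) → B2,
      ((Matrix.of fun I' J' : Fin (m+1) → B2 => ∏ i, ρf i (I' i) (J' i)) *
        (Matrix.of fun I' J' : Fin (m+1) → B2 =>
          (if (I' 0).1 = (J' 0).1 then (1:ℂ) else 0) *
          (if (I' (Fin.last m)).2 = (J' (Fin.last m)).2 then 1 else 0) *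
          ∏ j : Fin m,
            Mf j ((I' j.castSucc).2, (I' j.succ).1) ((J' j.castSucc).2, (J' j.succ).1)))
        I (fun i => (if (i:ℕ) = 0 then q.1 else (I i).1, if (i:ℕ) = m then q.2 else (I i).2))
      = ∑ K : Fin (m+1) → B2, (∏ i, ρf i (I i) (K i)) *
          ((if (K 0).1 = q.1 then (1:ℂ) else 0) * (if (K (Fin.last m)).2 = q.2 then 1 else 0) *
           ∏ j : Fin m, Mf j ((K j.castSucc).2, (K j.succ).1)
             ((I j.castSucc).2, (I j.succ).1)) := by
    intro I
    rw [Matrix.mul_apply]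
    refine Finset.sum_congr rfl fun K _ => ?_
    simp only [Matrix.of_apply]
    congr 1
    simp only [Fin.val_zero, Fin.val_last, Fin.coe_castSucc, Fin.val_succ, Nat.succ_ne_zero,
      if_true, if_false, ite_true, ite_false, reduceIte]
    congr 1
    exact Finset.prod_congr rfl fun j _ => by rw [if_neg (Nat.ne_of_lt j.isLt)]
  simp only [hbody, chainL]
  refine Finset.sum_congr rfl fun I _ => ?_
  by_cases hA : (I 0).1 = p.1
  · by_cases hB : (I (Fin.last m)).2 = p.2
    · rw [if_pos ⟨hA, hB⟩]
      refine Finset.sum_congr rfl fun K _ => ?_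
      rw [if_pos hA, if_pos hB]
      ring
    · rw [if_neg (by tauto)]
      symm
      refine Finset.sum_eq_zero fun K _ => ?_
      rw [if_neg hB]
      ring
  · rw [if_neg (by tauto)]
    symm
    refine Finset.sum_eq_zero fun K _ => ?_
    rw [if_neg hA]
    ring

lemma Jcollapse' (m : ℕ) (q1 q2 : Fin 2) (A B : Prop) [dA : Decidable A] [dB : Decidable B]
    (f : (Fin (m+1) → B2) → ℂ) (I : Fin (m+1) → B2)
    (dec : ∀ J : Fin (m+1) → B2, Decidable (A ∧ (J ⟨0, m.succ_pos⟩).1 = q1 ∧ B ∧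
         (J ⟨m, m.lt_succ_self⟩).2 = q2 ∧
         (∀ i : Fin (m+1), (i:ℕ) ≠ 0 → (I i).1 = (J i).1) ∧
         (∀ i : Fin (m+1), (i:ℕ) ≠ m → (I i).2 = (J i).2))) :
    (∑ J : Fin (m+1) → B2,
      @ite ℂ (A ∧ (J ⟨0, m.succ_pos⟩).1 = q1 ∧ B ∧ (J ⟨m, m.lt_succ_self⟩).2 = q2 ∧
         (∀ i : Fin (m+1), (i:ℕ) ≠ 0 → (I i).1 = (J i).1) ∧
         (∀ i : Fin (m+1), (i:ℕ) ≠ m → (I i).2 = (J i).2)) (dec J) (f J) 0)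
    = if A ∧ B then
        f (fun i => (if (i:ℕ) = 0 then q1 else (I i).1, if (i:ℕ) = m then q2 else (I i).2))
      else 0 := by
  refine Eq.trans ?_ (Jcollapse m q1 q2 A B f I)
  exact Finset.sum_congr rfl fun J _ => if_congr Iff.rfl rfl rfl

lemma toChain' (m : ℕ) (ρf : Fin (m+1) → Matrix B2 B2 ℂ)
    (Mf : Fin (m+1-1) → Matrix B2 B2 ℂ) (p q : B2) :
    (∑ I : Fin (m+1) → B2,
      if (I ⟨0, m.succ_pos⟩).1 = p.1 ∧ (I ⟨m, m.lt_succ_self⟩).2 = p.2 then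
        ((Matrix.of fun I' J' : Fin (m+1) → B2 => ∏ i, ρf i (I' i) (J' i)) *
          (Matrix.of fun I' J' : Fin (m+1) → B2 =>
            (if (I' ⟨0, m.succ_pos⟩).1 = (J' ⟨0, m.succ_pos⟩).1 then (1:ℂ) else 0) *
            (if (I' ⟨m, m.lt_succ_self⟩).2 = (J' ⟨m, m.lt_succ_self⟩).2 then 1 else 0) *
            ∏ j : Fin (m+1-1),
              Mf j ((I' ⟨j.1, by have := j.isLt; omega⟩).2,
                    (I' ⟨j.1 + 1, by have := j.isLt; omega⟩).1)
                   ((J' ⟨j.1, by have := j.isLt; omega⟩).2,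
                    (J' ⟨j.1 + 1, by have := j.isLt; omega⟩).1)))
          I (fun i => (if (i:ℕ) = 0 then q.1 else (I i).1, if (i:ℕ) = m then q.2 else (I i).2))
      else 0)
    = chainL m ρf Mf (p.1, q.1) (p.2, q.2) := by
  refine Eq.trans ?_ (toChain m ρf Mf p q)
  exact Finset.sum_congr rfl fun I _ => if_congr Iff.rfl rfl rfl

open scoped Classical in
/-- Swapping scenario with N two-qubit sources: source `i` holds qubits `(i,0)` and `(i,1)`;
measurement `j` acts on qubits `(j,1)` and `(j+1,0)`. The unnormalized post-measurement
reduced state of the first and last qubits equals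
`(1/4) Σ_{k,l} [∏ᵢ R_i 𝔯_i]_{kl} σ_k ⊗ σ_l`, with `𝔯_N := 𝟙` by convention. -/
theorem stmt13 (N : ℕ) (hN : 2 ≤ N)
    (ρs : Fin N → Matrix (Fin 2 × Fin 2) (Fin 2 × Fin 2) ℂ)
    (hρ : ∀ i, (ρs i).PosSemidef ∧ (ρs i).trace = 1)
    (Ms : Fin (N - 1) → Matrix (Fin 2 × Fin 2) (Fin 2 × Fin 2) ℂ)
    (hM : ∀ j, (Ms j).PosSemidef)
    (Rs : Fin N → Matrix (Fin 4) (Fin 4) ℂ)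
    (hRs : ∀ i k l, Rs i k l = (ρs i * (σ k ⊗ₖ σ l)).trace)
    (rs : Fin N → Matrix (Fin 4) (Fin 4) ℂ)
    (hrs : ∀ (i : Fin N) (h : (i : ℕ) < N - 1) (k l : Fin 4),
      rs i k l = (1/4 : ℂ) * (Ms ⟨i, h⟩ * (σ k ⊗ₖ σ l)).trace)
    (hrlast : ∀ i : Fin N, ¬ ((i : ℕ) < N - 1) → rs i = 1) :
    (Matrix.of fun p q : Fin 2 × Fin 2 =>
      -- partial trace over all qubits except the first, `(0,0)`, and the last, `(N-1,1)`
      ∑ I : Fin N → Fin 2 × Fin 2, ∑ J : Fin N → Fin 2 × Fin 2,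
        if (I ⟨0, by omega⟩).1 = p.1 ∧ (J ⟨0, by omega⟩).1 = q.1 ∧
            (I ⟨N - 1, by omega⟩).2 = p.2 ∧ (J ⟨N - 1, by omega⟩).2 = q.2 ∧
            (∀ i : Fin N, (i : ℕ) ≠ 0 → (I i).1 = (J i).1) ∧
            (∀ i : Fin N, (i : ℕ) ≠ N - 1 → (I i).2 = (J i).2)
        then
          ((Matrix.of fun I' J' : Fin N → Fin 2 × Fin 2 =>
              -- the total state ⊗ᵢ ρ^{p_{2i-1},p_{2i}}
              ∏ i : Fin N, ρs i (I' i) (J' i)) *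
            (Matrix.of fun I' J' : Fin N → Fin 2 × Fin 2 =>
              -- 𝟙^{p₁} ⊗ (⊗ⱼ M^{p_{2j},p_{2j+1}}) ⊗ 𝟙^{p_{2N}}
              (if (I' ⟨0, by omega⟩).1 = (J' ⟨0, by omega⟩).1 then 1 else 0) *
              (if (I' ⟨N - 1, by omega⟩).2 = (J' ⟨N - 1, by omega⟩).2 then 1 else 0) *
              ∏ j : Fin (N - 1),
                Ms j ((I' ⟨j.1, by have := j.isLt; omega⟩).2,
                      (I' ⟨j.1 + 1, by have := j.isLt; omega⟩).1)
                     ((J' ⟨j.1, by have := j.isLt; omega⟩).2,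
                      (J' ⟨j.1 + 1, by have := j.isLt; omega⟩).1))) I J
        else 0)
    = (1/4 : ℂ) • ∑ k : Fin 4, ∑ l : Fin 4,
        ((List.ofFn fun i : Fin N => Rs i * rs i).prod) k l • (σ k ⊗ₖ σ l) := by
  obtain ⟨m, rfl⟩ : ∃ m, N = m + 1 := ⟨N - 1, by omega⟩
  ext p q
  simp only [Matrix.of_apply, Nat.add_sub_cancel]
  conv_lhs => enter [2, I]; rw [Jcollapse' m q.1 q.2 _ _ _ I _]
  rw [toChain' m ρs Ms p q]
  rw [chainKey m ρs Ms (p.1, q.1) (p.2, q.2)]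
  have hR : ∀ i : Fin (m+1), Rs i = Umat * conj4 (ρs i) * Vmat := fun i => by
    ext k l; rw [hRs i k l, trace_expand]
  have hr : ∀ j : Fin m, rs j.castSucc = (1/4:ℂ) • (Umat * conj4 (Ms j) * Vmat) := by
    intro j
    ext k l
    rw [hrs j.castSucc (by simp) k l, trace_expand]
    rfl
  have hLp : (List.ofFn fun i : Fin (m+1) => Rs i * rs i).prod
      = (2:ℂ) • Φ (((List.ofFn fun j : Fin m =>
          conj4 (ρs j.castSucc) * conj4 (Ms j)).prod) * conj4 (ρs (Fin.last m))) := by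
    rw [List.ofFn_succ', List.prod_concat]
    rw [hrlast (Fin.last m) (by simp)]
    rw [mul_one, hR (Fin.last m)]
    rw [show (List.ofFn fun i : Fin m => Rs i.castSucc * rs i.castSucc)
        = (List.ofFn fun j : Fin m => conj4 (ρs j.castSucc) * conj4 (Ms j)).map Φ by
      rw [List.map_ofFn]
      exact congrArg _ (funext fun j => by rw [hR, hr j, UAV_mul]; rfl)]
    rw [Φ_listprod, UAV_mul_one, Matrix.mul_smul, Φ_mul]
  simp only [Matrix.smul_apply, Matrix.sum_apply, Matrix.kroneckerMap_apply, smul_eq_mul]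
  rw [hLp, contract]
  rw [Matrix.mul_apply]
  rfl
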